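/- Let (X, μ) be a standard Borel space with an atomless Borel probability measure μ, let Φ be a countable family of partial isomorphisms of (X, μ) generating an ergodic equivalence relation R (i.e. (x, y) ∈ R iff y = m(x) for some Φ-word m, and every Borel union of R-classes is μ-null or μ-conull), and let Y ⊆ X be a Borel set with μ(Y) > 0. Then there exists a nontrivial asymptotically invariant sequence for R on (X, μ) if and only if there exists a nontrivial asymptotically invariant sequence for the restricted relation R ∩ (Y × Y) on Y equipped with the normalized measure μ_Y = μ(· ∩ Y)/μ(Y). (Existence of nontrivial asymptotically invariant sequences is invariant under stable orbit equivalence.) -/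

import Mathlib

open MeasureTheory Filter Set
open scoped ENNReal

/-- A partial isomorphism of a standard Borel space `X`: a Borel bijection between
two Borel subsets `dom` and `ran` of `X`, with Borel inverse. -/
structure PartialIso (X : Type*) [MeasurableSpace X] where
  dom : Set X
  ran : Set X
  toFun : X → X
  invFun : X → X
  measurableSet_dom : MeasurableSet dom
  measurableSet_ran : MeasurableSet ran
  measurable_toFun : Measurable toFun
  measurable_invFun : Measurable invFun
  mapsTo : Set.MapsTo toFun dom ran
  mapsTo_inv : Set.MapsTo invFun ran dom
  left_inv : ∀ x ∈ dom, invFun (toFun x) = x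
  right_inv : ∀ y ∈ ran, toFun (invFun y) = y

namespace PartialIso

variable {X : Type*} [MeasurableSpace X]

/-- The identity as a partial isomorphism. -/
def refl (X : Type*) [MeasurableSpace X] : PartialIso X :=
  ⟨Set.univ, Set.univ, id, id, MeasurableSet.univ, MeasurableSet.univ,
   measurable_id, measurable_id, Set.mapsTo_univ _ _, Set.mapsTo_univ _ _,
   fun _ _ => rfl, fun _ _ => rfl⟩

/-- The inverse of a partial isomorphism. -/
def symm (f : PartialIso X) : PartialIso X :=
  ⟨f.ran, f.dom, f.invFun, f.toFun, f.measurableSet_ran, f.measurableSet_dom,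
   f.measurable_invFun, f.measurable_toFun, f.mapsTo_inv, f.mapsTo,
   f.right_inv, f.left_inv⟩

/-- Composition (first `f`, then `g`) of partial isomorphisms, on its natural domain. -/
def trans (f g : PartialIso X) : PartialIso X where
  dom := f.dom ∩ f.toFun ⁻¹' g.dom
  ran := g.ran ∩ g.invFun ⁻¹' f.ran
  toFun := g.toFun ∘ f.toFun
  invFun := f.invFun ∘ g.invFun
  measurableSet_dom := f.measurableSet_dom.inter (f.measurable_toFun g.measurableSet_dom)
  measurableSet_ran := g.measurableSet_ran.inter (g.measurable_invFun f.measurableSet_ran)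
  measurable_toFun := g.measurable_toFun.comp f.measurable_toFun
  measurable_invFun := f.measurable_invFun.comp g.measurable_invFun
  mapsTo := by
    rintro x ⟨hx1, hx2⟩
    refine ⟨g.mapsTo hx2, ?_⟩
    show g.invFun (g.toFun (f.toFun x)) ∈ f.ran
    rw [g.left_inv _ hx2]
    exact f.mapsTo hx1
  mapsTo_inv := by
    rintro y ⟨hy1, hy2⟩
    refine ⟨f.mapsTo_inv hy2, ?_⟩
    show f.toFun (f.invFun (g.invFun y)) ∈ g.dom
    rw [f.right_inv _ hy2]
    exact g.mapsTo_inv hy1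
  left_inv := by
    rintro x ⟨hx1, hx2⟩
    show f.invFun (g.invFun (g.toFun (f.toFun x))) = x
    rw [g.left_inv _ hx2, f.left_inv _ hx1]
  right_inv := by
    rintro y ⟨hy1, hy2⟩
    show g.toFun (f.toFun (f.invFun (g.invFun y))) = y
    rw [f.right_inv _ hy2, g.right_inv _ hy1]

/-- A partial isomorphism is nonsingular for `μ` (is a partial isomorphism of `(X, μ)`)
if it maps null sets inside its domain exactly to null sets. -/
def Nonsingular (μ : Measure X) (f : PartialIso X) : Prop :=
  ∀ A ⊆ f.dom, MeasurableSet A → (μ A = 0 ↔ μ (f.toFun '' A) = 0)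

/-- The graph of the partial isomorphism `f` is contained in the relation `R`. -/
def IsInnerOf (f : PartialIso X) (R : Set (X × X)) : Prop :=
  ∀ x ∈ f.dom, (x, f.toFun x) ∈ R

end PartialIso

variable {X : Type*} [MeasurableSpace X]

/-- `IsWord Φ m k` : `m` is a `Φ`-word of length `k`, i.e. a composition of `k` elements
of `Φ` and their inverses (on its natural domain). -/
def IsWord (Φ : Set (PartialIso X)) (m : PartialIso X) (k : ℕ) : Prop :=
  ∃ l : List (PartialIso X), l.length = k ∧
    (∀ φ ∈ l, φ ∈ Φ ∨ ∃ ψ ∈ Φ, φ = ψ.symm) ∧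
    m = l.foldl PartialIso.trans (PartialIso.refl X)

/-- `wordDistLE Φ μ A B r` : the essential distance `d_Φ(A, B)` is at most `r`, i.e. the
set of points of `A` sent into `B` by some `Φ`-word of length at most `r` has positive
measure. -/
def wordDistLE (Φ : Set (PartialIso X)) (μ : Measure X) (A B : Set X) (r : ℕ) : Prop :=
  0 < μ {x ∈ A | ∃ m k, IsWord Φ m k ∧ k ≤ r ∧ x ∈ m.dom ∧ m.toFun x ∈ B}

/-- The metric-measure space `(X, d_Φ, μ)` is concentrated. -/
def Concentrated (Φ : Set (PartialIso X)) (μ : Measure X) : Prop :=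
  ∀ δ : ℝ≥0∞, 0 < δ → ∃ r : ℕ, ∀ A B : Set X, MeasurableSet A → MeasurableSet B →
    δ ≤ μ A → δ ≤ μ B → wordDistLE Φ μ A B r

/-- The metric `d_Φ` is ergodic relative to `μ` : any two sets of positive measure are at
finite essential distance. -/
def MetricErgodic (Φ : Set (PartialIso X)) (μ : Measure X) : Prop :=
  ∀ A B : Set X, MeasurableSet A → MeasurableSet B → 0 < μ A → 0 < μ B →
    ∃ r : ℕ, wordDistLE Φ μ A B r

/-- A sequence of Borel sets is asymptotically invariant for the family `Φ`. -/
def AsympInvariant (Φ : Set (PartialIso X)) (μ : Measure X) (A : ℕ → Set X) : Prop :=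
  ∀ m k, IsWord Φ m k →
    Tendsto (fun n => μ (m.toFun '' (A n ∩ m.dom) \ A n)) atTop (nhds 0)

/-- A sequence of Borel sets is nontrivial: measures uniformly bounded away from `0` and `1`. -/
def NontrivialSeq (μ : Measure X) (A : ℕ → Set X) : Prop :=
  ∃ δ : ℝ≥0∞, 0 < δ ∧ ∀ n, δ ≤ μ (A n) ∧ μ (A n) ≤ 1 - δ

/-- A countable Borel equivalence relation on `X`. -/
def IsCountableBorelER (R : Set (X × X)) : Prop :=
  MeasurableSet R ∧ Equivalence (fun x y => (x, y) ∈ R) ∧ ∀ x, {y | (x, y) ∈ R}.Countable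

/-- `μ` is quasi-invariant for `R` : partial isomorphisms of `R` map null sets to null sets. -/
def QuasiInvariant (μ : Measure X) (R : Set (X × X)) : Prop :=
  ∀ f : PartialIso X, f.IsInnerOf R → ∀ N ⊆ f.dom, MeasurableSet N → μ N = 0 →
    μ (f.toFun '' N) = 0

/-- `μ` is invariant for `R` : partial isomorphisms of `R` preserve the measure. -/
def InvariantMeasure (μ : Measure X) (R : Set (X × X)) : Prop :=
  ∀ f : PartialIso X, f.IsInnerOf R → ∀ A ⊆ f.dom, MeasurableSet A →
    μ (f.toFun '' A) = μ A

/-- `R` is ergodic for `μ` : every Borel saturated set is null or conull. -/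
def ErgodicRel (μ : Measure X) (R : Set (X × X)) : Prop :=
  ∀ A : Set X, MeasurableSet A → (∀ x ∈ A, ∀ y, (x, y) ∈ R → y ∈ A) →
    μ A = 0 ∨ μ Aᶜ = 0

/-- `Φ` is a graphing of `R` : a family of partial isomorphisms of `R` whose words connect
almost every pair of equivalent points. -/
def IsGraphing (Φ : Set (PartialIso X)) (μ : Measure X) (R : Set (X × X)) : Prop :=
  (∀ φ ∈ Φ, φ.IsInnerOf R) ∧
  ∀ᵐ x ∂μ, ∀ y, (x, y) ∈ R → ∃ m k, IsWord Φ m k ∧ x ∈ m.dom ∧ m.toFun x = y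

/-- A sequence of Borel sets is asymptotically invariant for the relation `R`. -/
def AsympInvariantRel (μ : Measure X) (R : Set (X × X)) (A : ℕ → Set X) : Prop :=
  ∀ f : PartialIso X, f.IsInnerOf R →
    Tendsto (fun n => μ (f.toFun '' (A n ∩ f.dom) \ A n)) atTop (nhds 0)

/-- `R` is strongly ergodic : every asymptotically invariant sequence is trivial. -/
def StronglyErgodic (μ : Measure X) (R : Set (X × X)) : Prop :=
  ¬ ∃ A : ℕ → Set X, (∀ n, MeasurableSet (A n)) ∧ AsympInvariantRel μ R A ∧
    NontrivialSeq μ A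

/-- The boundary `∂_Φ A` of a set `A` with respect to the family `Φ`. -/
def bdry (Φ : Set (PartialIso X)) (A : Set X) : Set X :=
  (⋃ φ ∈ Φ, φ.toFun '' (A ∩ φ.dom) ∪ φ.invFun '' (A ∩ φ.ran)) \ A

/-- A vanishing Følner sequence for the family `Φ`. -/
def VanishingFolner (Φ : Set (PartialIso X)) (μ : Measure X) (A : ℕ → Set X) : Prop :=
  (∀ n, MeasurableSet (A n)) ∧ (∀ n, 0 < μ (A n)) ∧
  Tendsto (fun n => μ (A n)) atTop (nhds 0) ∧
  Tendsto (fun n => μ (bdry Φ (A n)) / μ (A n)) atTop (nhds 0)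

/-- The equivalence relation generated by the family `Φ` : `(x, y) ∈ RGen Φ` iff `y = m x`
for some `Φ`-word `m`. -/
def RGen (Φ : Set (PartialIso X)) : Set (X × X) :=
  {p | ∃ m k, IsWord Φ m k ∧ p.1 ∈ m.dom ∧ m.toFun p.1 = p.2}


namespace PartialIso
variable {X : Type*} [MeasurableSpace X]

theorem ext' {f g : PartialIso X} (hdom : f.dom = g.dom) (hran : f.ran = g.ran)
    (htf : f.toFun = g.toFun) (hif : f.invFun = g.invFun) : f = g := by
  cases f; cases g; simp_all

@[simp] theorem symm_symm (f : PartialIso X) : f.symm.symm = f := rfl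

theorem symm_trans (f g : PartialIso X) : (f.trans g).symm = g.symm.trans f.symm := rfl

@[simp] theorem symm_refl : (refl X).symm = refl X := rfl

theorem trans_assoc (f g h : PartialIso X) : (f.trans g).trans h = f.trans (g.trans h) := by
  refine ext' ?_ ?_ rfl rfl <;> · ext x; simp [trans, and_assoc]

@[simp] theorem refl_trans (f : PartialIso X) : (refl X).trans f = f := by
  refine ext' ?_ ?_ rfl rfl <;> · show _ = _ ; simp [refl, trans]

@[simp] theorem trans_refl (f : PartialIso X) : f.trans (refl X) = f := by
  refine ext' ?_ ?_ rfl rfl <;> · show _ = _ ; simp [refl, trans]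

theorem foldl_trans_eq (l : List (PartialIso X)) (a : PartialIso X) :
    l.foldl trans a = a.trans (l.foldl trans (refl X)) := by
  induction l generalizing a with
  | nil => simp
  | cons b l ih =>
    show (l.foldl trans (a.trans b)) = _
    rw [ih (a.trans b), trans_assoc]
    congr 1
    show _ = (l.foldl trans ((refl X).trans b))
    rw [ih ((refl X).trans b), refl_trans]

theorem foldl_trans_append (l l' : List (PartialIso X)) :
    (l ++ l').foldl trans (refl X)
      = (l.foldl trans (refl X)).trans (l'.foldl trans (refl X)) := by
  rw [List.foldl_append, foldl_trans_eq]

theorem foldl_trans_cons (b : PartialIso X) (l : List (PartialIso X)) :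
    (b :: l).foldl trans (refl X) = b.trans (l.foldl trans (refl X)) := by
  show (l.foldl trans ((refl X).trans b)) = _
  rw [foldl_trans_eq, refl_trans]

theorem foldl_trans_symm (l : List (PartialIso X)) :
    (l.foldl trans (refl X)).symm = ((l.map symm).reverse).foldl trans (refl X) := by
  induction l with
  | nil => simp
  | cons b l ih =>
    show ((l.foldl trans ((refl X).trans b)).symm) = _
    rw [foldl_trans_eq, refl_trans, symm_trans, ih]
    have h1 : [b.symm].foldl trans (refl X) = b.symm := by simp
    rw [← h1, ← foldl_trans_append]
    simp


theorem image_eq (f : PartialIso X) {S : Set X} (hS : S ⊆ f.dom) :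
    f.toFun '' S = f.ran ∩ f.invFun ⁻¹' S := by
  ext y
  constructor
  · rintro ⟨x, hx, rfl⟩
    exact ⟨f.mapsTo (hS hx), by rw [Set.mem_preimage, f.left_inv _ (hS hx)]; exact hx⟩
  · rintro ⟨hy, hy2⟩
    exact ⟨f.invFun y, hy2, f.right_inv _ hy⟩

theorem measurableSet_image (f : PartialIso X) {S : Set X} (hS : S ⊆ f.dom)
    (hSm : MeasurableSet S) : MeasurableSet (f.toFun '' S) := by
  rw [f.image_eq hS]
  exact f.measurableSet_ran.inter (f.measurable_invFun hSm)

theorem image_subset_ran (f : PartialIso X) {S : Set X} (hS : S ⊆ f.dom) :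
    f.toFun '' S ⊆ f.ran := fun _ ⟨x, hx, h⟩ => h ▸ f.mapsTo (hS hx)

theorem injOn_dom (f : PartialIso X) : Set.InjOn f.toFun f.dom := fun x hx y hy h => by
  rw [← f.left_inv x hx, ← f.left_inv y hy, h]

theorem symm_image_image (f : PartialIso X) {S : Set X} (hS : S ⊆ f.dom) :
    f.invFun '' (f.toFun '' S) = S := by
  ext x
  constructor
  · rintro ⟨y, ⟨z, hz, rfl⟩, rfl⟩
    rw [f.left_inv _ (hS hz)]; exact hz
  · intro hx
    exact ⟨f.toFun x, ⟨x, hx, rfl⟩, f.left_inv _ (hS hx)⟩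

theorem Nonsingular.symm {μ : Measure X} {f : PartialIso X} (hf : f.Nonsingular μ) :
    f.symm.Nonsingular μ := by
  intro A hA hAm
  have h1 : f.dom ∩ f.toFun ⁻¹' A ⊆ f.dom := Set.inter_subset_left
  have h2 := hf _ h1 (f.measurableSet_dom.inter (f.measurable_toFun hAm))
  have h3 : f.toFun '' (f.dom ∩ f.toFun ⁻¹' A) = A := by
    ext y
    constructor
    · rintro ⟨x, ⟨_, hx2⟩, rfl⟩; exact hx2
    · intro hy
      exact ⟨f.invFun y, ⟨f.mapsTo_inv (hA hy), by
        rw [Set.mem_preimage, f.right_inv _ (hA hy)]; exact hy⟩, f.right_inv _ (hA hy)⟩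
  rw [h3] at h2
  have h4 : f.symm.toFun '' A = f.dom ∩ f.toFun ⁻¹' A := by
    show f.invFun '' A = _
    ext x
    constructor
    · rintro ⟨y, hy, rfl⟩
      exact ⟨f.mapsTo_inv (hA hy), by rw [Set.mem_preimage, f.right_inv _ (hA hy)]; exact hy⟩
    · rintro ⟨hx1, hx2⟩
      exact ⟨f.toFun x, hx2, f.left_inv _ hx1⟩
  rw [h4]
  exact h2.symm

theorem Nonsingular.trans {μ : Measure X} {f g : PartialIso X} (hf : f.Nonsingular μ)
    (hg : g.Nonsingular μ) : (f.trans g).Nonsingular μ := by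
  intro A hA hAm
  have hA1 : A ⊆ f.dom := hA.trans Set.inter_subset_left
  have him : f.toFun '' A ⊆ g.dom := by
    rintro y ⟨x, hx, rfl⟩
    exact hA hx |>.2
  have h1 := hf _ hA1 hAm
  have h2 := hg _ him (f.measurableSet_image hA1 hAm)
  rw [h1, h2]
  have : g.toFun '' (f.toFun '' A) = (f.trans g).toFun '' A := by
    rw [Set.image_image]; rfl
  rw [this]

theorem Nonsingular.refl (μ : Measure X) : (refl X).Nonsingular μ := by
  intro A _ _
  simp [PartialIso.refl]


/-- Restriction of a partial isomorphism to a measurable subset of its domain. -/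
def restrict (f : PartialIso X) (S : Set X) (hSm : MeasurableSet S) (hS : S ⊆ f.dom) :
    PartialIso X where
  dom := S
  ran := f.toFun '' S
  toFun := f.toFun
  invFun := f.invFun
  measurableSet_dom := hSm
  measurableSet_ran := f.measurableSet_image hS hSm
  measurable_toFun := f.measurable_toFun
  measurable_invFun := f.measurable_invFun
  mapsTo := Set.mapsTo_image _ _
  mapsTo_inv := by
    rintro y ⟨x, hx, rfl⟩
    rw [f.left_inv _ (hS hx)]
    exact hx
  left_inv := fun x hx => f.left_inv _ (hS hx)
  right_inv := by
    rintro y ⟨x, hx, rfl⟩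
    rw [f.left_inv _ (hS hx)]

end PartialIso

namespace JS


open PartialIso

theorem isWord_refl (Φ : Set (PartialIso X)) : IsWord Φ (refl X) 0 :=
  ⟨[], rfl, by simp, rfl⟩

theorem wordTrans {Φ : Set (PartialIso X)} {m m' : PartialIso X} {k k' : ℕ}
    (h : IsWord Φ m k) (h' : IsWord Φ m' k') : IsWord Φ (m.trans m') (k + k') := by
  obtain ⟨l, hl, hmem, rfl⟩ := h
  obtain ⟨l', hl', hmem', rfl⟩ := h'
  refine ⟨l ++ l', by simp [hl, hl'], ?_, (foldl_trans_append l l').symm⟩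
  intro φ hφ
  rcases List.mem_append.1 hφ with h | h
  exacts [hmem _ h, hmem' _ h]

theorem wordSymm {Φ : Set (PartialIso X)} {m : PartialIso X} {k : ℕ}
    (h : IsWord Φ m k) : IsWord Φ m.symm k := by
  obtain ⟨l, hl, hmem, rfl⟩ := h
  refine ⟨(l.map PartialIso.symm).reverse, by simp [hl], ?_, foldl_trans_symm l⟩
  intro φ hφ
  rw [List.mem_reverse, List.mem_map] at hφ
  obtain ⟨ψ, hψ, rfl⟩ := hφ
  rcases hmem _ hψ with h | ⟨χ, hχ, rfl⟩
  · exact Or.inr ⟨ψ, h, rfl⟩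
  · exact Or.inl (by rw [symm_symm]; exact hχ)

theorem rgen_refl (Φ : Set (PartialIso X)) (x : X) : (x, x) ∈ RGen Φ :=
  ⟨refl X, 0, isWord_refl Φ, Set.mem_univ x, rfl⟩

theorem rgen_symm {Φ : Set (PartialIso X)} {x y : X} (h : (x, y) ∈ RGen Φ) :
    (y, x) ∈ RGen Φ := by
  obtain ⟨m, k, hw, hx, heq⟩ := h
  replace hx : x ∈ m.dom := hx
  replace heq : m.toFun x = y := heq
  subst heq
  exact ⟨m.symm, k, (wordSymm hw), m.mapsTo hx, m.left_inv _ hx⟩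

theorem rgen_trans {Φ : Set (PartialIso X)} {x y z : X} (h : (x, y) ∈ RGen Φ)
    (h' : (y, z) ∈ RGen Φ) : (x, z) ∈ RGen Φ := by
  obtain ⟨m, k, hw, hx, heq⟩ := h
  obtain ⟨m', k', hw', hy, heq'⟩ := h'
  replace hx : x ∈ m.dom := hx
  replace heq : m.toFun x = y := heq
  replace hy : y ∈ m'.dom := hy
  replace heq' : m'.toFun y = z := heq'
  subst heq'
  refine ⟨m.trans m', k + k', (wordTrans hw hw'), ⟨hx, ?_⟩, ?_⟩
  · show m.toFun x ∈ m'.dom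
    rw [heq]; exact hy
  · show m'.toFun (m.toFun x) = m'.toFun y
    rw [heq]

theorem isWord_inner {Φ : Set (PartialIso X)} {m : PartialIso X} {k : ℕ}
    (h : IsWord Φ m k) : m.IsInnerOf (RGen Φ) := fun x hx => ⟨m, k, h, hx, rfl⟩

theorem _root_.PartialIso.IsInnerOf.symm' {Φ : Set (PartialIso X)} {f : PartialIso X}
    (h : f.IsInnerOf (RGen Φ)) : f.symm.IsInnerOf (RGen Φ) := fun y hy =>
  rgen_symm (by have := h _ (f.mapsTo_inv hy); rwa [f.right_inv _ hy] at this)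

theorem isWord_nonsingular {Φ : Set (PartialIso X)} {μ : Measure X}
    (hns : ∀ φ ∈ Φ, φ.Nonsingular μ) {m : PartialIso X} {k : ℕ} (h : IsWord Φ m k) :
    m.Nonsingular μ := by
  obtain ⟨l, -, hmem, rfl⟩ := h
  induction l with
  | nil => exact Nonsingular.refl μ
  | cons b l ih =>
    have hb : b.Nonsingular μ := by
      rcases hmem b (List.mem_cons_self) with h | ⟨ψ, hψ, rfl⟩
      · exact hns _ h
      · exact (hns _ hψ).symm
    have hl : (l.foldl PartialIso.trans (PartialIso.refl X)).Nonsingular μ :=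
      ih (fun φ hφ => hmem φ (List.mem_cons_of_mem _ hφ))
    rw [foldl_trans_cons]
    exact hb.trans hl

theorem words_countable {Φ : Set (PartialIso X)} (hcnt : Φ.Countable) :
    {m : PartialIso X | ∃ k, IsWord Φ m k}.Countable := by
  classical
  set Φ' : Set (PartialIso X) := Φ ∪ PartialIso.symm '' Φ with hΦ'
  have hΦ'c : Φ'.Countable := hcnt.union (hcnt.image _)
  have : Countable ↥Φ' := hΦ'c.to_subtype
  refine Set.Countable.mono ?_
    (Set.countable_range fun l : List ↥Φ' =>
      (l.map Subtype.val).foldl PartialIso.trans (refl X))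
  rintro m ⟨k, l, -, hmem, rfl⟩
  have hm : ∀ φ ∈ l, φ ∈ Φ' := by
    intro φ hφ
    rcases hmem φ hφ with h | ⟨ψ, hψ, rfl⟩
    · exact Or.inl h
    · exact Or.inr ⟨ψ, hψ, rfl⟩
  obtain ⟨l', hl'⟩ : ∃ l' : List ↥Φ', l'.map Subtype.val = l := by
    clear hmem
    induction l with
    | nil => exact ⟨[], rfl⟩
    | cons b l ih =>
      obtain ⟨l', hl'⟩ := ih (fun φ hφ => hm φ (List.mem_cons_of_mem _ hφ))
      exact ⟨⟨b, hm b (List.mem_cons_self)⟩ :: l', by simp [hl']⟩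
  refine ⟨l', ?_⟩
  show List.foldl PartialIso.trans (PartialIso.refl X) (l'.map Subtype.val) = _
  rw [hl']



theorem tendsto_zero_of_le {g h : ℕ → ℝ≥0∞} (hle : ∀ n, g n ≤ h n)
    (hh : Tendsto h atTop (nhds 0)) : Tendsto g atTop (nhds 0) :=
  tendsto_of_tendsto_of_tendsto_of_le_of_le tendsto_const_nhds hh
    (fun n => zero_le) hle

theorem mapsNull {μ : Measure X} {Φ : Set (PartialIso X)} (hcnt : Φ.Countable)
    (hns : ∀ φ ∈ Φ, φ.Nonsingular μ) {f : PartialIso X} (hf : f.IsInnerOf (RGen Φ))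
    {S : Set X} (hSm : MeasurableSet S) (hS : S ⊆ f.dom) (h0 : μ S = 0) :
    μ (f.toFun '' S) = 0 := by
  have hcover : f.toFun '' S ⊆
      ⋃ m ∈ {m : PartialIso X | ∃ k, IsWord Φ m k}, m.toFun '' (S ∩ m.dom) := by
    rintro y ⟨x, hx, rfl⟩
    obtain ⟨m, k, hw, hxd, heq⟩ := hf x (hS hx)
    replace heq : m.toFun x = f.toFun x := heq
    exact Set.mem_biUnion ⟨k, hw⟩ ⟨x, ⟨hx, hxd⟩, heq⟩
  refine measure_mono_null hcover ?_
  rw [measure_biUnion_null_iff (words_countable hcnt)]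
  rintro m ⟨k, hw⟩
  have hns' := isWord_nonsingular hns hw
  exact (hns' _ Set.inter_subset_right (hSm.inter m.measurableSet_dom)).1
    (measure_mono_null Set.inter_subset_left h0)

theorem absCont {μ : Measure X} [IsFiniteMeasure μ] (f : PartialIso X)
    (hnull : ∀ S, MeasurableSet S → S ⊆ f.dom → μ S = 0 → μ (f.toFun '' S) = 0) :
    ∀ ε : ℝ≥0∞, 0 < ε → ∃ η : ℝ≥0∞, 0 < η ∧
      ∀ S, MeasurableSet S → S ⊆ f.dom → μ S ≤ η → μ (f.toFun '' S) ≤ ε := by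
  by_contra hcon
  push_neg at hcon
  obtain ⟨ε, hε, hfail⟩ := hcon
  choose T hTm hTd hTle hTgt using fun k : ℕ =>
    hfail ((1/2 : ℝ≥0∞)^k) (ENNReal.pow_pos (by norm_num) k)
  set C : ℕ → Set X := fun n => ⋃ k, T (n + k) with hC
  have hCm : ∀ n, MeasurableSet (C n) := fun n => MeasurableSet.iUnion (fun k => hTm _)
  have hCd : ∀ n, C n ⊆ f.dom := fun n => Set.iUnion_subset (fun k => hTd _)
  have hCanti : Antitone C := by
    intro a b hab
    refine Set.iUnion_subset (fun k => ?_)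
    have : b + k = a + (b - a + k) := by omega
    rw [this]
    exact Set.subset_iUnion (fun k => T (a + k)) _
  have hCb : ∀ n, μ (C n) ≤ (1/2 : ℝ≥0∞)^n * 2 := by
    intro n
    calc μ (C n) ≤ ∑' k, μ (T (n + k)) := measure_iUnion_le _
    _ ≤ ∑' k : ℕ, (1/2 : ℝ≥0∞)^(n + k) := ENNReal.tsum_le_tsum (fun k => hTle _)
    _ = (1/2 : ℝ≥0∞)^n * ∑' k : ℕ, (1/2 : ℝ≥0∞)^k := by
        simp_rw [pow_add]; rw [ENNReal.tsum_mul_left]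
    _ = (1/2 : ℝ≥0∞)^n * 2 := by
        rw [ENNReal.tsum_geometric]
        norm_num
  have hN0 : μ (⋂ n, C n) = 0 := by
    have hb : ∀ n, μ (⋂ n, C n) ≤ (1/2 : ℝ≥0∞)^n * 2 :=
      fun n => le_trans (measure_mono (Set.iInter_subset _ n)) (hCb n)
    have ht : Tendsto (fun n => (1/2 : ℝ≥0∞)^n * 2) atTop (nhds 0) := by
      have := ENNReal.tendsto_pow_atTop_nhds_zero_of_lt_one
        (by norm_num : (1/2 : ℝ≥0∞) < 1)
      simpa using ENNReal.Tendsto.mul_const this (Or.inr (by norm_num))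
    exact le_antisymm (ge_of_tendsto' ht hb) (zero_le)
  set D : ℕ → Set X := fun n => f.toFun '' C n with hD
  have hiD : ⋂ n, D n = f.toFun '' ⋂ n, C n := by
    refine (Set.InjOn.image_iInter_eq ?_).symm
    exact f.injOn_dom.mono (Set.iUnion_subset hCd)
  have hDtend : Tendsto (μ ∘ D) atTop (nhds (μ (⋂ n, D n))) := by
    refine tendsto_measure_iInter_atTop
      (fun n => (f.measurableSet_image (hCd n) (hCm n)).nullMeasurableSet)
      (fun a b hab => Set.image_mono (hCanti hab)) ⟨0, measure_ne_top μ _⟩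
  have hεle : ε ≤ μ (⋂ n, D n) := by
    refine ge_of_tendsto' hDtend (fun n => ?_)
    refine le_trans (le_of_lt (hTgt n)) (measure_mono (Set.image_mono ?_))
    have : T n = T (n + 0) := by rw [Nat.add_zero]
    rw [this]
    exact Set.subset_iUnion (fun k => T (n + k)) 0
  rw [hiD] at hεle
  rw [hnull _ (MeasurableSet.iInter hCm) (Set.Subset.trans (Set.iInter_subset _ 0) (hCd 0)) hN0]
    at hεle
  exact hε.ne' (le_antisymm hεle (zero_le))

theorem absCont_tendsto {μ : Measure X} [IsFiniteMeasure μ] (f : PartialIso X)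
    (hnull : ∀ S, MeasurableSet S → S ⊆ f.dom → μ S = 0 → μ (f.toFun '' S) = 0)
    {C : ℕ → Set X} (hCm : ∀ n, MeasurableSet (C n)) (hCd : ∀ n, C n ⊆ f.dom)
    (hC : Tendsto (fun n => μ (C n)) atTop (nhds 0)) :
    Tendsto (fun n => μ (f.toFun '' C n)) atTop (nhds 0) := by
  rw [ENNReal.tendsto_nhds_zero]
  intro ε hε
  obtain ⟨η, hη, habs⟩ := absCont f hnull ε hε
  filter_upwards [ENNReal.tendsto_nhds_zero.1 hC η hη] with n hn
  exact habs _ (hCm n) (hCd n) hn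


theorem compl_ai {μ : Measure X} [IsFiniteMeasure μ] {Φ : Set (PartialIso X)}
    (hcnt : Φ.Countable) (hns : ∀ φ ∈ Φ, φ.Nonsingular μ) {A : ℕ → Set X}
    (hAm : ∀ n, MeasurableSet (A n)) (hai : AsympInvariantRel μ (RGen Φ) A) :
    AsympInvariantRel μ (RGen Φ) (fun n => (A n)ᶜ) := by
  intro f hf
  have hsub : ∀ n, f.toFun '' ((A n)ᶜ ∩ f.dom) \ (A n)ᶜ ⊆
      f.toFun '' (((A n)ᶜ ∩ f.dom) ∩ f.toFun ⁻¹' (A n)) := by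
    rintro n y ⟨⟨x, hx, rfl⟩, hy⟩
    rw [Set.mem_compl_iff, not_not] at hy
    exact ⟨x, ⟨hx, hy⟩, rfl⟩
  refine tendsto_zero_of_le (fun n => measure_mono (hsub n)) ?_
  refine absCont_tendsto f (fun S h1 h2 h3 => mapsNull hcnt hns hf h1 h2 h3)
    (fun n => ((hAm n).compl.inter f.measurableSet_dom).inter
      (f.measurable_toFun (hAm n)))
    (fun n => Set.Subset.trans Set.inter_subset_left Set.inter_subset_right) ?_
  have hTeq : ∀ n, ((A n)ᶜ ∩ f.dom) ∩ f.toFun ⁻¹' (A n)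
      = (f.symm.toFun '' (A n ∩ f.symm.dom)) \ (A n) := by
    intro n
    ext x
    constructor
    · rintro ⟨⟨hxc, hxd⟩, hxp⟩
      exact ⟨⟨f.toFun x, ⟨hxp, f.mapsTo hxd⟩, f.left_inv _ hxd⟩, hxc⟩
    · rintro ⟨⟨y, ⟨hy1, hy2⟩, rfl⟩, hxc⟩
      refine ⟨⟨hxc, f.mapsTo_inv hy2⟩, ?_⟩
      show f.toFun (f.invFun y) ∈ A n
      rw [f.right_inv _ hy2]
      exact hy1
  have h3 : (fun n => μ (((A n)ᶜ ∩ f.dom) ∩ f.toFun ⁻¹' (A n)))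
      = fun n => μ ((f.symm.toFun '' (A n ∩ f.symm.dom)) \ A n) :=
    funext fun n => by rw [hTeq n]
  rw [h3]
  exact hai f.symm hf.symm'

end JS

open JS

/-- For a countable family `Φ` generating an ergodic relation `R = RGen Φ`
and a Borel set `Y` of positive measure, there is a nontrivial asymptotically invariant
sequence for `R` on `(X, μ)` iff there is one for the restriction of `R` to `Y` with the
normalized measure. -/
theorem stmt11 {X : Type*} [MeasurableSpace X] [StandardBorelSpace X]
    (μ : Measure X) [IsProbabilityMeasure μ] [NullSingletonClass μ]
    (Φ : Set (PartialIso X)) (hcnt : Φ.Countable)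
    (hns : ∀ φ ∈ Φ, φ.Nonsingular μ)
    (herg : ErgodicRel μ (RGen Φ))
    (Y : Set X) (hY : MeasurableSet Y) (hYpos : 0 < μ Y) :
    (∃ A : ℕ → Set X, (∀ n, MeasurableSet (A n)) ∧
        AsympInvariantRel μ (RGen Φ) A ∧ NontrivialSeq μ A) ↔
      (∃ B : ℕ → Set X, (∀ n, MeasurableSet (B n) ∧ B n ⊆ Y) ∧
        (∀ ψ : PartialIso X, ψ.dom ⊆ Y → ψ.ran ⊆ Y → ψ.IsInnerOf (RGen Φ) →
          Tendsto (fun n => μ (ψ.toFun '' (B n ∩ ψ.dom) \ B n) / μ Y) atTop (nhds 0)) ∧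
        (∃ δ : ℝ≥0∞, 0 < δ ∧ ∀ n, δ ≤ μ (B n) / μ Y ∧ μ (B n) / μ Y ≤ 1 - δ)) := by
  classical
  have hYne : μ Y ≠ 0 := hYpos.ne'
  have hYtop : μ Y ≠ ∞ := (measure_lt_top μ Y).ne
  -- enumeration of words starting with the identity
  obtain ⟨e0, he0⟩ := (words_countable hcnt).exists_eq_range
    ⟨PartialIso.refl X, 0, isWord_refl Φ⟩
  set e : ℕ → PartialIso X := fun n => Nat.casesOn n (PartialIso.refl X) e0 with he
  have he0' : e 0 = PartialIso.refl X := rfl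
  have heword : ∀ j, ∃ k, IsWord Φ (e j) k := by
    intro j
    cases j with
    | zero => exact ⟨0, isWord_refl Φ⟩
    | succ i =>
      have : e0 i ∈ {m : PartialIso X | ∃ k, IsWord Φ m k} := by
        rw [he0]; exact Set.mem_range_self i
      exact this
  have hecover : ∀ (m : PartialIso X) (k : ℕ), IsWord Φ m k → ∃ j, e j = m := by
    intro m k hm
    have : m ∈ {m : PartialIso X | ∃ k, IsWord Φ m k} := ⟨k, hm⟩
    rw [he0] at this
    obtain ⟨i, hi⟩ := this
    exact ⟨i + 1, hi⟩
  have heinner : ∀ j, (e j).IsInnerOf (RGen Φ) := fun j =>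
    isWord_inner (heword j).choose_spec
  -- maps-null property for inner isomorphisms
  have hmn : ∀ f : PartialIso X, f.IsInnerOf (RGen Φ) →
      ∀ S, MeasurableSet S → S ⊆ f.dom → μ S = 0 → μ (f.toFun '' S) = 0 :=
    fun f hf S h1 h2 h3 => mapsNull hcnt hns hf h1 h2 h3
  -- the sets D and their disjointification P
  set D : ℕ → Set X := fun j => (e j).dom ∩ (e j).toFun ⁻¹' Y with hD
  have hDm : ∀ j, MeasurableSet (D j) := fun j =>
    (e j).measurableSet_dom.inter ((e j).measurable_toFun hY)
  have hD0 : D 0 = Y := by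
    rw [hD]
    simp [he0', PartialIso.refl]
  have hSat : μ (⋃ j, D j)ᶜ = 0 := by
    have hinv : ∀ x ∈ ⋃ j, D j, ∀ y, (x, y) ∈ RGen Φ → y ∈ ⋃ j, D j := by
      intro x hx y hxy
      obtain ⟨j, hxj⟩ := Set.mem_iUnion.1 hx
      obtain ⟨hxd, hxY⟩ := hxj
      obtain ⟨w, k, hww, hxw, hwx⟩ := hxy
      replace hxw : x ∈ w.dom := hxw
      replace hwx : w.toFun x = y := hwx
      obtain ⟨kj, hkj⟩ := heword j
      obtain ⟨j', hj'⟩ := hecover _ _ (wordTrans (wordSymm hww) hkj)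
      refine Set.mem_iUnion.2 ⟨j', ?_⟩
      rw [hD]
      refine ⟨?_, ?_⟩ <;> rw [hj']
      · refine ⟨hwx ▸ w.mapsTo hxw, ?_⟩
        show w.invFun y ∈ (e j).dom
        rw [← hwx, w.left_inv _ hxw]
        exact hxd
      · show (e j).toFun (w.invFun y) ∈ Y
        rw [← hwx, w.left_inv _ hxw]
        exact hxY
    rcases herg (⋃ j, D j) (MeasurableSet.iUnion hDm) hinv with h | h
    · exfalso
      have : μ (D 0) = 0 := measure_mono_null (Set.subset_iUnion D 0) h
      rw [hD0] at this
      exact hYne this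
    · exact h
  have hDconull : μ (⋃ j, D j) = 1 := by
    have h1 := measure_add_measure_compl (μ := μ) (MeasurableSet.iUnion hDm)
    rw [hSat, add_zero, measure_univ] at h1
    exact h1
  set P : ℕ → Set X := fun j => D j \ ⋃ i, ⋃ (_ : i < j), D i with hP
  have hPm : ∀ j, MeasurableSet (P j) := fun j =>
    (hDm j).diff (MeasurableSet.iUnion fun i => MeasurableSet.iUnion fun _ => hDm i)
  have hPD : ∀ j, P j ⊆ D j := fun j => Set.diff_subset
  have hP0 : P 0 = Y := by
    rw [hP]
    simp only [Nat.not_lt_zero, Set.iUnion_of_empty, Set.iUnion_empty, Set.diff_empty, hD0]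
  have hPdisj : ∀ i j, i ≠ j → ∀ x, x ∈ P i → x ∈ P j → False := by
    have key : ∀ i j, i < j → ∀ x, x ∈ P i → x ∈ P j → False := by
      intro i j hij x hxi hxj
      exact hxj.2 (Set.mem_iUnion.2 ⟨i, Set.mem_iUnion.2 ⟨hij, hPD i hxi⟩⟩)
    intro i j hij x hxi hxj
    rcases lt_or_gt_of_ne hij with h | h
    · exact key i j h x hxi hxj
    · exact key j i h x hxj hxi
  have hPunion : (⋃ j, P j) = ⋃ j, D j := by
    apply Set.Subset.antisymm
    · exact Set.iUnion_mono fun j => hPD j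
    · intro x hx
      have hex : ∃ j, x ∈ D j := Set.mem_iUnion.1 hx
      refine Set.mem_iUnion.2 ⟨Nat.find hex, Nat.find_spec hex, ?_⟩
      intro hmem
      obtain ⟨i, hi⟩ := Set.mem_iUnion.1 hmem
      obtain ⟨hlt, hxi⟩ := Set.mem_iUnion.1 hi
      exact Nat.find_min hex hlt hxi
  have hPconull : μ (⋃ j, P j)ᶜ = 0 := by rw [hPunion]; exact hSat
  constructor
  · -- forward direction
    rintro ⟨A, hAm, hAai, δ, hδ, hAb⟩
    have hδ1 : δ ≤ 1 := le_trans (hAb 0).1 prob_le_one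
    have hδtop : δ ≠ ∞ := (lt_of_le_of_lt hδ1 ENNReal.one_lt_top).ne
    -- key quantitative lemma
    have key : ∀ (A : ℕ → Set X), (∀ n, MeasurableSet (A n)) →
        AsympInvariantRel μ (RGen Φ) A → (∀ n, δ ≤ μ (A n)) →
        ∃ c, 0 < c ∧ ∃ N0, ∀ n, N0 ≤ n → c ≤ μ (A n ∩ Y) := by
      intro A hAm hAai hAb
      -- choose N with small complement
      set V : ℕ → Set X := fun N => ⋃ j ∈ Finset.range N, D j with hV
      have hVm : ∀ N, MeasurableSet (V N) := fun N =>
        MeasurableSet.biUnion (Finset.range N).countable_toSet fun j _ => hDm j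
      have hVmono : Monotone V := by
        intro a b hab
        intro x hx
        obtain ⟨j, hj, hxj⟩ := Set.mem_iUnion₂.1 hx
        exact Set.mem_biUnion
          (Finset.mem_range.2 (lt_of_lt_of_le (Finset.mem_range.1 hj) hab)) hxj
      have hVU : (⋃ N, V N) = ⋃ j, D j := by
        apply Set.Subset.antisymm
        · refine Set.iUnion_subset fun N => ?_
          exact Set.iUnion₂_subset fun j _ => Set.subset_iUnion D j
        · refine Set.iUnion_subset fun j => ?_
          intro x hx
          refine Set.mem_iUnion.2 ⟨j + 1, ?_⟩
          exact Set.mem_biUnion (Finset.mem_range.2 (Nat.lt_succ_self j)) hx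
      have hVtend : Tendsto (fun N => μ ((V N)ᶜ)) atTop (nhds 0) := by
        have h1 : Tendsto (fun N => μ (V N)) atTop (nhds 1) := by
          have := tendsto_measure_iUnion_atTop (μ := μ) hVmono
          rw [hVU, hDconull] at this
          exact this
        have h2 : (fun N => μ ((V N)ᶜ)) = fun N => 1 - μ (V N) :=
          funext fun N => prob_compl_eq_one_sub (hVm N)
        rw [h2]
        have := ENNReal.Tendsto.sub (tendsto_const_nhds (x := (1:ℝ≥0∞)))
          h1 (Or.inl ENNReal.one_ne_top)
        simpa using this
      have hδ4 : (0:ℝ≥0∞) < δ / 4 := ENNReal.div_pos hδ.ne' (by norm_num)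
      obtain ⟨N, hN⟩ := (ENNReal.tendsto_nhds_zero.1 hVtend (δ/4) hδ4).exists
      -- absolute continuity constants for the inverses of the words
      have habs : ∀ j, ∃ η : ℝ≥0∞, 0 < η ∧ ∀ S, MeasurableSet S → S ⊆ (e j).symm.dom →
          μ S ≤ η → μ ((e j).symm.toFun '' S) ≤ δ / (4 * (N + 1)) := by
        intro j
        exact absCont (e j).symm (hmn _ ((heinner j).symm'))
          (δ / (4 * (N + 1)))
          (ENNReal.div_pos hδ.ne' (by
            refine ENNReal.mul_ne_top (by norm_num) ?_
            exact ENNReal.add_ne_top.2 ⟨ENNReal.natCast_ne_top N, ENNReal.one_ne_top⟩))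
      choose η hη hη2 using habs
      set c : ℝ≥0∞ := (Finset.range N).inf fun j => η j / 2 with hc
      have hcpos : 0 < c := by
        rw [hc]
        refine (Finset.lt_inf_iff (by norm_num : (0:ℝ≥0∞) < ⊤)).2 fun j _ =>
          ENNReal.half_pos (hη j).ne'
      refine ⟨c, hcpos, ?_⟩
      -- eventual smallness of all error terms
      have herr : ∀ᶠ n in atTop, ∀ j ∈ Finset.range N,
          μ ((e j).toFun '' (A n ∩ (e j).dom) \ A n) ≤ η j / 2 := by
        rw [Filter.eventually_all_finset]
        intro j _
        exact ENNReal.tendsto_nhds_zero.1 (hAai (e j) (heinner j)) _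
          (ENNReal.half_pos (hη j).ne')
      rw [Filter.eventually_atTop] at herr
      obtain ⟨N0, hN0⟩ := herr
      refine ⟨N0, fun n hn => ?_⟩
      by_contra hcon
      push_neg at hcon
      -- each piece is small
      have hj2 : ∀ j ∈ Finset.range N, μ (A n ∩ D j) ≤ δ / (4 * (N + 1)) := by
        intro j hj
        have hADd : A n ∩ D j ⊆ (e j).dom := fun x hx => hx.2.1
        have hsub : (e j).toFun '' (A n ∩ D j) ⊆
            ((e j).toFun '' (A n ∩ (e j).dom) \ A n) ∪ (A n ∩ Y) := by
          rintro y ⟨x, ⟨hxA, hxD⟩, rfl⟩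
          by_cases hmem : (e j).toFun x ∈ A n
          · exact Or.inr ⟨hmem, hxD.2⟩
          · exact Or.inl ⟨⟨x, ⟨hxA, hxD.1⟩, rfl⟩, hmem⟩
        have hb : μ ((e j).toFun '' (A n ∩ D j)) ≤ η j := by
          calc μ ((e j).toFun '' (A n ∩ D j))
              ≤ μ (((e j).toFun '' (A n ∩ (e j).dom) \ A n) ∪ (A n ∩ Y)) :=
                measure_mono hsub
            _ ≤ μ ((e j).toFun '' (A n ∩ (e j).dom) \ A n) + μ (A n ∩ Y) :=
                measure_union_le _ _
            _ ≤ η j / 2 + η j / 2 := by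
                refine add_le_add (hN0 n hn j hj) ?_
                refine le_trans hcon.le ?_
                rw [hc]
                exact Finset.inf_le hj
            _ = η j := ENNReal.add_halves _
        have := hη2 j ((e j).toFun '' (A n ∩ D j))
          ((e j).measurableSet_image hADd ((hAm n).inter (hDm j)))
          ((e j).image_subset_ran hADd) hb
        rwa [show (e j).symm.toFun '' ((e j).toFun '' (A n ∩ D j)) = A n ∩ D j from
          (e j).symm_image_image hADd] at this
      -- sum up
      have hcover : A n ⊆ (V N)ᶜ ∪ ⋃ j ∈ Finset.range N, (A n ∩ D j) := by
        intro x hx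
        by_cases hv : x ∈ V N
        · obtain ⟨j, hj, hxD⟩ := Set.mem_iUnion₂.1 hv
          exact Or.inr (Set.mem_biUnion hj ⟨hx, hxD⟩)
        · exact Or.inl hv
      have hsum : μ (A n) ≤ δ / 4 + δ / 4 := by
        calc μ (A n) ≤ μ ((V N)ᶜ ∪ ⋃ j ∈ Finset.range N, (A n ∩ D j)) :=
            measure_mono hcover
          _ ≤ μ ((V N)ᶜ) + μ (⋃ j ∈ Finset.range N, (A n ∩ D j)) := measure_union_le _ _
          _ ≤ δ / 4 + ∑ j ∈ Finset.range N, μ (A n ∩ D j) := by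
              refine add_le_add hN ?_
              exact measure_biUnion_finset_le _ _
          _ ≤ δ / 4 + δ / 4 := by
              refine add_le_add le_rfl ?_
              calc ∑ j ∈ Finset.range N, μ (A n ∩ D j)
                  ≤ ∑ _j ∈ Finset.range N, δ / (4 * (N + 1)) := Finset.sum_le_sum hj2
                _ = N * (δ / (4 * (N + 1))) := by
                    rw [Finset.sum_const, Finset.card_range, nsmul_eq_mul]
                _ ≤ (N + 1) * (δ / (4 * (N + 1))) := by
                    refine mul_le_mul_left ?_ _
                    exact le_self_add
                _ = δ / 4 := by
                    have h1 : (δ : ℝ≥0∞) / (4 * (N + 1)) = δ / 4 / (N + 1) := by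
                      rw [div_eq_mul_inv, div_eq_mul_inv, div_eq_mul_inv,
                        ENNReal.mul_inv (Or.inl (by norm_num))
                          (Or.inl (by norm_num)), mul_assoc]
                    rw [h1]
                    exact ENNReal.mul_div_cancel
                      ((lt_of_lt_of_le zero_lt_one le_add_self).ne' :
                        ((N : ℝ≥0∞) + 1) ≠ 0)
                      (ENNReal.add_ne_top.2
                        ⟨ENNReal.natCast_ne_top N, ENNReal.one_ne_top⟩)
      have h44 : (δ:ℝ≥0∞) / 4 = δ / 2 / 2 := by
        rw [show (4:ℝ≥0∞) = 2 * 2 from by norm_num, div_eq_mul_inv,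
          ENNReal.mul_inv (Or.inl (by norm_num)) (Or.inl (by norm_num)), ← mul_assoc,
          div_eq_mul_inv, div_eq_mul_inv]
      have hhalf : (δ:ℝ≥0∞) / 4 + δ / 4 = δ / 2 := by
        rw [h44]; exact ENNReal.add_halves _
      have : δ ≤ δ / 2 := le_trans (hAb n) (le_trans hsum (le_of_eq hhalf))
      exact absurd this (not_le.2 (ENNReal.half_lt_self hδ.ne' hδtop))
    -- apply the key lemma to A and its complement
    have hAbd : ∀ n, δ ≤ μ (A n) := fun n => (hAb n).1
    have hAcm : ∀ n, MeasurableSet ((A n)ᶜ) := fun n => (hAm n).compl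
    have hAcai : AsympInvariantRel μ (RGen Φ) (fun n => (A n)ᶜ) :=
      compl_ai hcnt hns hAm hAai
    have hAcbd : ∀ n, δ ≤ μ ((A n)ᶜ) := by
      intro n
      rw [prob_compl_eq_one_sub (hAm n)]
      calc δ = 1 - (1 - δ) := (ENNReal.sub_sub_cancel ENNReal.one_ne_top hδ1).symm
        _ ≤ 1 - μ (A n) := tsub_le_tsub_left (hAb n).2 1
    obtain ⟨c1, hc1, N1, hN1⟩ := key A hAm hAai hAbd
    obtain ⟨c2, hc2, N2, hN2⟩ := key (fun n => (A n)ᶜ) hAcm hAcai hAcbd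
    set N3 := max N1 N2 with hN3
    refine ⟨fun n => A (n + N3) ∩ Y, fun n => ⟨(hAm _).inter hY, Set.inter_subset_right⟩,
      ?_, ?_⟩
    · -- asymptotic invariance
      intro ψ hψd hψr hψi
      have hEq : ∀ n, ψ.toFun '' ((A (n + N3) ∩ Y) ∩ ψ.dom) \ (A (n + N3) ∩ Y)
          = ψ.toFun '' (A (n + N3) ∩ ψ.dom) \ A (n + N3) := by
        intro n
        have h1 : (A (n + N3) ∩ Y) ∩ ψ.dom = A (n + N3) ∩ ψ.dom := by
          ext x
          exact ⟨fun ⟨⟨h1, _⟩, h3⟩ => ⟨h1, h3⟩, fun ⟨h1, h3⟩ => ⟨⟨h1, hψd h3⟩, h3⟩⟩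
        rw [h1]
        ext y
        constructor
        · rintro ⟨hy1, hy2⟩
          refine ⟨hy1, fun hmem => hy2 ⟨hmem, ?_⟩⟩
          obtain ⟨x, hx, rfl⟩ := hy1
          exact hψr (ψ.mapsTo hx.2)
        · rintro ⟨hy1, hy2⟩
          exact ⟨hy1, fun hmem => hy2 hmem.1⟩
      have h1 := (hAai ψ hψi).comp (tendsto_add_atTop_nat N3)
      have h2 : Tendsto
          (fun n => μ (ψ.toFun '' ((A (n + N3) ∩ Y) ∩ ψ.dom) \ (A (n + N3) ∩ Y)))
          atTop (nhds 0) := by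
        refine Tendsto.congr (fun n => ?_) h1
        rw [hEq n]
        rfl
      have h3 := ENNReal.Tendsto.mul_const h2 (Or.inr (ENNReal.inv_ne_top.2 hYne))
      rw [zero_mul] at h3
      simpa [div_eq_mul_inv] using h3
    · -- nontriviality
      refine ⟨min (c1 / μ Y) (c2 / μ Y),
        lt_min (ENNReal.div_pos hc1.ne' hYtop) (ENNReal.div_pos hc2.ne' hYtop),
        fun n => ⟨?_, ?_⟩⟩
      · refine le_trans (min_le_left _ _) ?_
        exact ENNReal.div_le_div_right (hN1 _ (le_trans (le_max_left _ _) (Nat.le_add_left _ _))) _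
      · have hdisj : Disjoint (A (n + N3) ∩ Y) ((A (n + N3))ᶜ ∩ Y) :=
          Set.disjoint_left.2 fun x hx hx' => hx'.1 hx.1
        have hunion : μ (A (n + N3) ∩ Y) + μ ((A (n + N3))ᶜ ∩ Y) ≤ μ Y := by
          rw [← measure_union hdisj ((hAm _).compl.inter hY)]
          refine measure_mono ?_
          rintro x (⟨_, h⟩ | ⟨_, h⟩) <;> exact h
        have hc2' : c2 ≤ μ ((A (n + N3))ᶜ ∩ Y) :=
          hN2 _ (le_trans (le_max_right _ _) (Nat.le_add_left _ _))
        have hle1 : μ (A (n + N3) ∩ Y) / μ Y + c2 / μ Y ≤ 1 := by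
          rw [ENNReal.div_add_div_same]
          refine le_trans (ENNReal.div_le_div_right
            (le_trans (add_le_add_right hc2' _) hunion) _) ?_
          exact ENNReal.div_self_le_one
        have hc2top : c2 / μ Y ≠ ∞ := by
          refine (ENNReal.div_lt_top ?_ hYne).ne
          exact ne_top_of_le_ne_top (measure_ne_top μ _) hc2'
        calc μ (A (n + N3) ∩ Y) / μ Y ≤ 1 - c2 / μ Y :=
            ENNReal.le_sub_of_add_le_right hc2top hle1
          _ ≤ 1 - min (c1 / μ Y) (c2 / μ Y) := tsub_le_tsub_left (min_le_right _ _) 1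
  · -- reverse direction
    rintro ⟨B, hBm, hBai, δ, hδ, hBb⟩
    have hBmeas : ∀ n, MeasurableSet (B n) := fun n => (hBm n).1
    have hBsub : ∀ n, B n ⊆ Y := fun n => (hBm n).2
    have hδ1 : δ ≤ 1 := by
      refine le_trans (hBb 0).1 ?_
      refine le_trans (ENNReal.div_le_div_right (measure_mono (hBsub 0)) _) ?_
      exact ENNReal.div_self_le_one
    have hBlo : ∀ n, δ * μ Y ≤ μ (B n) := by
      intro n
      exact (ENNReal.le_div_iff_mul_le (Or.inl hYne) (Or.inl hYtop)).1 (hBb n).1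
    have hBhi : ∀ n, δ * μ Y ≤ μ (Y \ B n) := by
      intro n
      have h1 : μ (B n) ≤ (1 - δ) * μ Y :=
        (ENNReal.div_le_iff_le_mul (Or.inl hYne) (Or.inl hYtop)).1 (hBb n).2
      have h2 : μ (Y \ B n) = μ Y - μ (B n) :=
        measure_diff (hBsub n) (hBmeas n).nullMeasurableSet (measure_lt_top μ _).ne
      rw [h2]
      have h3 : μ Y = (1 - δ) * μ Y + δ * μ Y := by
        rw [← add_mul, tsub_add_cancel_of_le hδ1, one_mul]
      calc δ * μ Y = ((1 - δ) * μ Y + δ * μ Y) - (1 - δ) * μ Y := by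
            rw [ENNReal.add_sub_cancel_left (ENNReal.mul_ne_top
              (by exact ne_top_of_le_ne_top ENNReal.one_ne_top tsub_le_self) hYtop)]
        _ = μ Y - (1 - δ) * μ Y := by rw [← h3]
        _ ≤ μ Y - μ (B n) := tsub_le_tsub_left h1 _
    set A : ℕ → Set X := fun n => ⋃ j, (P j ∩ (e j).toFun ⁻¹' (B n)) with hA
    have hAm : ∀ n, MeasurableSet (A n) := fun n =>
      MeasurableSet.iUnion fun j => (hPm j).inter ((e j).measurable_toFun (hBmeas n))
    have hAY : ∀ n, A n ∩ Y = B n := by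
      intro n
      ext x
      constructor
      · rintro ⟨hxA, hxY⟩
        obtain ⟨j, hxP, hxB⟩ := Set.mem_iUnion.1 hxA
        cases j with
        | zero => rw [he0'] at hxB; exact hxB
        | succ i =>
          exfalso
          exact hPdisj 0 (i + 1) (by omega) x (by rw [hP0]; exact hxY) hxP
      · intro hxB
        have hpre : x ∈ (e 0).toFun ⁻¹' (B n) := by rw [he0']; exact hxB
        exact ⟨Set.mem_iUnion.2 ⟨0, ⟨by rw [hP0]; exact hBsub n hxB, hpre⟩⟩, hBsub n hxB⟩
    refine ⟨A, hAm, ?_, ?_⟩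
    · -- asymptotic invariance of A
      intro f hf
      set G : ℕ × ℕ → Set X := fun q => (f.dom ∩ P q.1) ∩ f.toFun ⁻¹' (P q.2) with hG
      have hGm : ∀ q, MeasurableSet (G q) := fun q =>
        (f.measurableSet_dom.inter (hPm q.1)).inter (f.measurable_toFun (hPm q.2))
      have hGd : ∀ q, G q ⊆ f.dom := fun q x hx => hx.1.1
      have hGdisj : ∀ q q' : ℕ × ℕ, q ≠ q' → ∀ x, x ∈ G q → x ∈ G q' → False := by
        rintro ⟨a, b⟩ ⟨a', b'⟩ hqq x hx hx'
        by_cases h1 : a = a'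
        · subst h1
          have h2 : b ≠ b' := fun h2 => hqq (by rw [h2])
          exact hPdisj _ _ h2 _ hx.2 hx'.2
        · exact hPdisj _ _ h1 _ hx.1.2 hx'.1.2
      -- the per-piece convergence
      have hpiece : ∀ q : ℕ × ℕ, Tendsto
          (fun n => μ (f.toFun '' (A n ∩ G q) \ A n)) atTop (nhds 0) := by
        rintro ⟨j, j'⟩
        set Q : Set X := G (j, j') with hQ
        have hQm : MeasurableSet Q := hGm (j, j')
        have hQP : Q ⊆ P j := fun x hx => hx.1.2
        have hQf : Q ⊆ f.dom := hGd (j, j')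
        have hQP' : ∀ x ∈ Q, f.toFun x ∈ P j' := fun x hx => hx.2
        have hQdom : Q ⊆ (e j).dom := fun x hx => (hPD j (hQP hx)).1
        set S : Set X := (e j).toFun '' Q with hS
        have hSm : MeasurableSet S := (e j).measurableSet_image hQdom hQm
        have hSY : S ⊆ Y := by
          rintro y ⟨x, hx, rfl⟩
          exact (hPD j (hQP hx)).2
        set g : PartialIso X := ((e j).symm.trans f).trans (e j') with hg
        have hSdom : S ⊆ g.dom := by
          rintro y ⟨x, hx, rfl⟩
          have hinv : (e j).invFun ((e j).toFun x) = x := (e j).left_inv _ (hQdom hx)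
          refine ⟨⟨(e j).mapsTo (hQdom hx), ?_⟩, ?_⟩
          · show (e j).invFun ((e j).toFun x) ∈ f.dom
            rw [hinv]
            exact hQf hx
          · show f.toFun ((e j).invFun ((e j).toFun x)) ∈ (e j').dom
            rw [hinv]
            exact (hPD j' (hQP' x hx)).1
        have hgval : ∀ x ∈ Q, g.toFun ((e j).toFun x) = (e j').toFun (f.toFun x) := by
          intro x hx
          show (e j').toFun (f.toFun ((e j).invFun ((e j).toFun x))) = _
          rw [(e j).left_inv _ (hQdom hx)]
        set ψ : PartialIso X := g.restrict S hSm hSdom with hψ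
        have hψd : ψ.dom ⊆ Y := hSY
        have hψr : ψ.ran ⊆ Y := by
          rintro y ⟨s, hs, rfl⟩
          obtain ⟨x, hx, rfl⟩ := hs
          show g.toFun ((e j).toFun x) ∈ Y
          rw [hgval x hx]
          exact (hPD j' (hQP' x hx)).2
        have hψi : ψ.IsInnerOf (RGen Φ) := by
          rintro y hy
          obtain ⟨x, hx, rfl⟩ := hy
          show ((e j).toFun x, g.toFun ((e j).toFun x)) ∈ RGen Φ
          rw [hgval x hx]
          have r1 : ((e j).toFun x, x) ∈ RGen Φ :=
            rgen_symm (heinner j x (hQdom hx))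
          have r2 : (x, f.toFun x) ∈ RGen Φ := hf x (hQf hx)
          have r3 : (f.toFun x, (e j').toFun (f.toFun x)) ∈ RGen Φ :=
            heinner j' _ (hPD j' (hQP' x hx)).1
          exact rgen_trans (rgen_trans r1 r2) r3
        have hψY := hBai ψ hψd hψr hψi
        have hψ0 : Tendsto (fun n => μ (ψ.toFun '' (B n ∩ ψ.dom) \ B n)) atTop (nhds 0) := by
          have h1 := ENNReal.Tendsto.mul_const hψY (Or.inr hYtop)
          rw [zero_mul] at h1
          refine Tendsto.congr (fun n => ?_) h1
          exact ENNReal.div_mul_cancel hYne hYtop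
        set C : ℕ → Set X := fun n => ψ.toFun '' (B n ∩ ψ.dom) \ B n with hC
        have hCm : ∀ n, MeasurableSet (C n) :=
          fun n => (ψ.measurableSet_image Set.inter_subset_right
            ((hBmeas n).inter hSm)).diff (hBmeas n)
        have hCd : ∀ n, C n ⊆ (e j').symm.dom := by
          rintro n y ⟨⟨s, hs, rfl⟩, -⟩
          obtain ⟨x, hx, rfl⟩ := hs.2
          show ψ.toFun ((e j).toFun x) ∈ (e j').ran
          show g.toFun ((e j).toFun x) ∈ (e j').ran
          rw [hgval x hx]
          exact (e j').mapsTo (hPD j' (hQP' x hx)).1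
        have hincl : ∀ n, f.toFun '' (A n ∩ Q) \ A n ⊆ (e j').symm.toFun '' C n := by
          rintro n z ⟨⟨x, ⟨hxA, hxQ⟩, rfl⟩, hzA⟩
          have hxB : (e j).toFun x ∈ B n := by
            obtain ⟨j0, hj0⟩ := Set.mem_iUnion.1 hxA
            have hj0' : j0 = j := by
              by_contra hne
              exact hPdisj j0 j hne x hj0.1 (hQP hxQ)
            rw [hj0'] at hj0
            exact hj0.2
          have hyS : (e j).toFun x ∈ ψ.dom := ⟨x, hxQ, rfl⟩
          have hu : ψ.toFun ((e j).toFun x) = (e j').toFun (f.toFun x) := hgval x hxQ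
          have huB : (e j').toFun (f.toFun x) ∉ B n := by
            intro hmem
            exact hzA (Set.mem_iUnion.2 ⟨j', hQP' x hxQ, hmem⟩)
          refine ⟨ψ.toFun ((e j).toFun x), ⟨⟨(e j).toFun x, ⟨hxB, hyS⟩, rfl⟩, ?_⟩, ?_⟩
          · rw [hu]; exact huB
          · show (e j').invFun (ψ.toFun ((e j).toFun x)) = f.toFun x
            rw [hu]
            exact (e j').left_inv _ (hPD j' (hQP' x hxQ)).1
        refine tendsto_zero_of_le (fun n => measure_mono (hincl n)) ?_
        exact absCont_tendsto (e j').symm (hmn _ ((heinner j').symm')) hCm hCd hψ0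
      -- assembling the pieces
      have hleft : μ (f.dom \ ⋃ q : ℕ × ℕ, G q) = 0 := by
        have hsub : f.dom \ (⋃ q : ℕ × ℕ, G q) ⊆
            (⋃ j, P j)ᶜ ∪ (f.dom ∩ f.toFun ⁻¹' (⋃ j, P j)ᶜ) := by
          rintro x ⟨hxd, hxn⟩
          by_cases h1 : x ∈ ⋃ j, P j
          · by_cases h2 : f.toFun x ∈ ⋃ j, P j
            · exfalso
              obtain ⟨j, hj⟩ := Set.mem_iUnion.1 h1
              obtain ⟨j', hj'⟩ := Set.mem_iUnion.1 h2
              exact hxn (Set.mem_iUnion.2 ⟨(j, j'), ⟨hxd, hj⟩, hj'⟩)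
            · exact Or.inr ⟨hxd, h2⟩
          · exact Or.inl h1
        refine measure_mono_null hsub (measure_union_null hPconull ?_)
        have himg : f.dom ∩ f.toFun ⁻¹' (⋃ j, P j)ᶜ
            = f.symm.toFun '' ((⋃ j, P j)ᶜ ∩ f.symm.dom) := by
          rw [f.symm.image_eq Set.inter_subset_right]
          show f.dom ∩ f.toFun ⁻¹' (⋃ j, P j)ᶜ
            = f.dom ∩ f.toFun ⁻¹' ((⋃ j, P j)ᶜ ∩ f.ran)
          ext x
          constructor
          · rintro ⟨h1, h2⟩
            exact ⟨h1, h2, f.mapsTo h1⟩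
          · rintro ⟨h1, h2, _⟩
            exact ⟨h1, h2⟩
        rw [himg]
        refine hmn f.symm hf.symm' _
          ((MeasurableSet.iUnion hPm).compl.inter f.symm.measurableSet_dom)
          Set.inter_subset_right
          (measure_mono_null Set.inter_subset_left hPconull)
      have hUm : ∀ q : ℕ × ℕ, MeasurableSet (f.toFun '' G q) :=
        fun q => f.measurableSet_image (hGd q) (hGm q)
      -- enumerate the pieces
      set σ : ℕ ≃ ℕ × ℕ := (Denumerable.eqv (ℕ × ℕ)).symm with hσ
      set W : ℕ → Set X := fun N => ⋃ i ∈ Finset.range N, f.toFun '' G (σ i) with hW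
      set U : Set X := ⋃ q : ℕ × ℕ, f.toFun '' G q with hU
      have hWU : (⋃ N, W N) = U := by
        apply Set.Subset.antisymm
        · exact Set.iUnion_subset fun N => Set.iUnion₂_subset fun i _ =>
            Set.subset_iUnion (fun q : ℕ × ℕ => f.toFun '' G q) (σ i)
        · refine Set.iUnion_subset fun q => ?_
          intro z hz
          refine Set.mem_iUnion.2 ⟨σ.symm q + 1, ?_⟩
          refine Set.mem_biUnion (Finset.mem_range.2 (Nat.lt_succ_self _)) ?_
          rw [Equiv.apply_symm_apply]
          exact hz
      have hWmono : Monotone W := by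
        intro a b hab
        intro x hx
        obtain ⟨i, hi, hxi⟩ := Set.mem_iUnion₂.1 hx
        exact Set.mem_biUnion
          (Finset.mem_range.2 (lt_of_lt_of_le (Finset.mem_range.1 hi) hab)) hxi
      have hWtend : Tendsto (fun N => μ (U \ W N)) atTop (nhds 0) := by
        have h1 : Tendsto (fun N => μ (W N)) atTop (nhds (μ U)) := by
          have := tendsto_measure_iUnion_atTop (μ := μ) hWmono
          rw [hWU] at this
          exact this
        have h2 : ∀ N, μ (U \ W N) = μ U - μ (W N) := by
          intro N
          refine measure_diff ?_ ?_ (measure_lt_top μ _).ne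
          · rw [← hWU]; exact Set.subset_iUnion W N
          · exact (MeasurableSet.biUnion (Finset.range N).countable_toSet
              fun i _ => hUm (σ i)).nullMeasurableSet
        have h3 := ENNReal.Tendsto.sub (tendsto_const_nhds (x := μ U)) h1
          (Or.inl (measure_lt_top μ _).ne)
        rw [tsub_self] at h3
        exact Tendsto.congr (fun N => (h2 N).symm) h3
      rw [ENNReal.tendsto_nhds_zero]
      intro ε hε
      have hε2 : (0:ℝ≥0∞) < ε / 2 := ENNReal.half_pos hε.ne'
      obtain ⟨N, hN⟩ := (ENNReal.tendsto_nhds_zero.1 hWtend (ε/2) hε2).exists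
      have hsumtend : Tendsto
          (fun n => ∑ i ∈ Finset.range N, μ (f.toFun '' (A n ∩ G (σ i)) \ A n))
          atTop (nhds 0) := by
        have := tendsto_finset_sum (Finset.range N)
          (fun i _ => hpiece (σ i))
        simpa using this
      filter_upwards [ENNReal.tendsto_nhds_zero.1 hsumtend (ε/2) hε2] with n hsum
      -- decomposition of the error set
      have hdecomp : f.toFun '' (A n ∩ f.dom) \ A n ⊆
          (f.toFun '' (f.dom \ ⋃ q : ℕ × ℕ, G q)) ∪ ((U \ W N) ∪
            ⋃ i ∈ Finset.range N, (f.toFun '' (A n ∩ G (σ i)) \ A n)) := by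
        rintro z ⟨⟨x, ⟨hxA, hxd⟩, rfl⟩, hzA⟩
        by_cases hq : x ∈ ⋃ q : ℕ × ℕ, G q
        · obtain ⟨q, hqx⟩ := Set.mem_iUnion.1 hq
          by_cases hi : σ.symm q ∈ Finset.range N
          · refine Or.inr (Or.inr ?_)
            refine Set.mem_biUnion hi ?_
            rw [Equiv.apply_symm_apply]
            exact ⟨⟨x, ⟨hxA, hqx⟩, rfl⟩, hzA⟩
          · refine Or.inr (Or.inl ?_)
            constructor
            · exact Set.mem_iUnion.2 ⟨q, ⟨x, hqx, rfl⟩⟩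
            · intro hzW
              obtain ⟨i, hi', hzi⟩ := Set.mem_iUnion₂.1 hzW
              obtain ⟨x', hx', hfx⟩ := hzi
              have hxx : x' = x := f.injOn_dom (hGd _ hx') hxd hfx
              rw [hxx] at hx'
              have : σ i = q := by
                by_contra hne
                exact hGdisj _ _ hne x hx' hqx
              apply hi
              rw [← this, Equiv.symm_apply_apply]
              exact hi'
        · exact Or.inl ⟨x, ⟨hxd, hq⟩, rfl⟩
      calc μ (f.toFun '' (A n ∩ f.dom) \ A n)
          ≤ μ (f.toFun '' (f.dom \ ⋃ q : ℕ × ℕ, G q)) + (μ (U \ W N) +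
            μ (⋃ i ∈ Finset.range N, (f.toFun '' (A n ∩ G (σ i)) \ A n))) := by
            refine le_trans (measure_mono hdecomp) ?_
            refine le_trans (measure_union_le _ _) ?_
            exact add_le_add le_rfl (measure_union_le _ _)
        _ ≤ 0 + (ε / 2 + ε / 2) := by
            refine add_le_add ?_ (add_le_add hN ?_)
            · rw [hmn f hf _ (f.measurableSet_dom.diff
                (MeasurableSet.iUnion fun q => hGm q)) Set.diff_subset hleft]
            · exact le_trans (measure_biUnion_finset_le _ _) hsum
        _ = ε := by rw [zero_add, ENNReal.add_halves]
    · -- nontriviality of A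
      refine ⟨δ * μ Y, ENNReal.mul_pos hδ.ne' hYne, fun n => ⟨?_, ?_⟩⟩
      · calc δ * μ Y ≤ μ (B n) := hBlo n
          _ = μ (A n ∩ Y) := (congrArg μ (hAY n)).symm
          _ ≤ μ (A n) := measure_mono Set.inter_subset_left
      · have hdisj : A n ⊆ (Y \ B n)ᶜ := by
          intro x hx
          intro hmem
          have : x ∈ A n ∩ Y := ⟨hx, hmem.1⟩
          rw [hAY n] at this
          exact hmem.2 this
        calc μ (A n) ≤ μ ((Y \ B n)ᶜ) := measure_mono hdisj
          _ = 1 - μ (Y \ B n) := prob_compl_eq_one_sub (hY.diff (hBmeas n))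
          _ ≤ 1 - δ * μ Y := tsub_le_tsub_left (hBhi n) 1
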